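/- Every C*-subalgebra of a C*-algebra with the strong countable chain condition has the strong countable chain condition. -/

import Mathlib

/-- A C*-subalgebra (i.e. a closed *-subalgebra) `B` of a C*-algebra `A` is hereditary if
whenever `a ∈ A` and `b ∈ B` are positive elements with `a ≤ b`, then `a ∈ B`. -/
def IsHereditarySubalgebra {A : Type*} [NonUnitalRing A] [Module ℂ A] [Star A]
    [TopologicalSpace A] [PartialOrder A] (B : NonUnitalStarSubalgebra ℂ A) : Prop :=
  IsClosed (B : Set A) ∧ ∀ a b : A, 0 ≤ a → 0 ≤ b → b ∈ B → a ≤ b → a ∈ B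

/-- A C*-algebra has the strong countable chain condition (strong CCC) if every family of
pairwise orthogonal nonzero hereditary C*-subalgebras is countable; two hereditary
C*-subalgebras `B₁, B₂` are orthogonal if `b₁ * b₂ = 0` for all `b₁ ∈ B₁`, `b₂ ∈ B₂`. -/
def StrongCCC (A : Type*) [NonUnitalRing A] [Module ℂ A] [Star A]
    [TopologicalSpace A] [PartialOrder A] : Prop :=
  ∀ 𝒮 : Set (NonUnitalStarSubalgebra ℂ A),
    (∀ B ∈ 𝒮, IsHereditarySubalgebra B ∧ ∃ b : A, b ∈ B ∧ b ≠ 0) →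
    (𝒮.Pairwise fun B C => ∀ b ∈ B, ∀ c ∈ C, (b : A) * c = 0) → 𝒮.Countable

open scoped NNReal

section Ann

variable {A : Type*} [NonUnitalCStarAlgebra A] [PartialOrder A] [StarOrderedRing A]

/-- The two-sided, star-closed annihilator of a set. -/
def myAnn (S : Set A) : NonUnitalStarSubalgebra ℂ A where
  carrier := {a : A | ∀ s ∈ S, a * s = 0 ∧ s * a = 0 ∧ a * star s = 0 ∧ star s * a = 0}
  add_mem' := by
    intro a b ha hb s hs
    obtain ⟨h1, h2, h3, h4⟩ := ha s hs
    obtain ⟨g1, g2, g3, g4⟩ := hb s hs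
    refine ⟨?_, ?_, ?_, ?_⟩ <;> simp [add_mul, mul_add, h1, h2, h3, h4, g1, g2, g3, g4]
  zero_mem' := by intro s hs; simp
  mul_mem' := by
    intro a b ha hb s hs
    obtain ⟨h1, h2, h3, h4⟩ := ha s hs
    obtain ⟨g1, g2, g3, g4⟩ := hb s hs
    exact ⟨by rw [mul_assoc, g1, mul_zero], by rw [← mul_assoc, h2, zero_mul],
      by rw [mul_assoc, g3, mul_zero], by rw [← mul_assoc, h4, zero_mul]⟩
  smul_mem' := by
    intro c a ha s hs
    obtain ⟨h1, h2, h3, h4⟩ := ha s hs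
    refine ⟨?_, ?_, ?_, ?_⟩ <;> simp [smul_mul_assoc, mul_smul_comm, h1, h2, h3, h4]
  star_mem' := by
    intro a ha s hs
    obtain ⟨h1, h2, h3, h4⟩ := ha s hs
    refine ⟨?_, ?_, ?_, ?_⟩
    · calc star a * s = star (star s * a) := by simp [star_mul]
        _ = 0 := by rw [h4, star_zero]
    · calc s * star a = star (a * star s) := by simp [star_mul]
        _ = 0 := by rw [h3, star_zero]
    · calc star a * star s = star (s * a) := by simp [star_mul]
        _ = 0 := by rw [h2, star_zero]
    · calc star s * star a = star (a * s) := by simp [star_mul]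
        _ = 0 := by rw [h1, star_zero]

lemma mem_myAnn {S : Set A} {a : A} :
    a ∈ myAnn S ↔ ∀ s ∈ S, a * s = 0 ∧ s * a = 0 ∧ a * star s = 0 ∧ star s * a = 0 :=
  Iff.rfl

lemma myAnn_isClosed (S : Set A) : IsClosed (myAnn S : Set A) := by
  have : (myAnn S : Set A) = ⋂ s ∈ S,
      ({a : A | a * s = 0} ∩ {a : A | s * a = 0} ∩ {a : A | a * star s = 0}
        ∩ {a : A | star s * a = 0}) := by
    ext a
    simp only [SetLike.mem_coe, mem_myAnn, Set.mem_iInter, Set.mem_inter_iff, Set.mem_setOf_eq]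
    exact forall₂_congr fun s hs => by tauto
  rw [this]
  refine isClosed_biInter fun s _ => ?_
  exact (((isClosed_eq (continuous_mul_right s) continuous_const).inter
    (isClosed_eq (continuous_mul_left s) continuous_const)).inter
    (isClosed_eq (continuous_mul_right (star s)) continuous_const)).inter
    (isClosed_eq (continuous_mul_left (star s)) continuous_const)

lemma subset_myAnn_myAnn (S : Set A) : S ⊆ (myAnn ((myAnn S : Set A)) : Set A) := by
  intro s hs
  intro x hx
  obtain ⟨h1, h2, h3, h4⟩ := hx s hs
  refine ⟨h2, h1, ?_, ?_⟩
  · calc s * star x = star (x * star s) := by simp [star_mul]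
      _ = 0 := by rw [h3, star_zero]
  · calc star x * s = star (star s * x) := by simp [star_mul]
      _ = 0 := by rw [h4, star_zero]

lemma myAnn_antitone {S T : Set A} (h : S ⊆ T) : (myAnn T : Set A) ⊆ (myAnn S : Set A) :=
  fun _ ha s hs => ha s (h hs)

/-- Key lemma: if `0 ≤ a` and `s * a * star s = 0` then `a * star s = 0`. -/
lemma mul_star_eq_zero_of_conj {a s : A} (ha : 0 ≤ a) (h : s * a * star s = 0) :
    a * star s = 0 := by
  set r := CFC.sqrt a with hr
  have hrnn : 0 ≤ r := CFC.sqrt_nonneg a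
  have hrr : r * r = a := CFC.sqrt_mul_sqrt_self a ha
  have hsa : IsSelfAdjoint r := IsSelfAdjoint.of_nonneg hrnn
  have key : star (r * star s) * (r * star s) = s * a * star s := by
    rw [star_mul, star_star, hsa.star_eq, mul_assoc, ← mul_assoc r r, hrr, ← mul_assoc]
  have hz : r * star s = 0 := by
    rw [h] at key
    exact (CStarRing.star_mul_self_eq_zero_iff _).mp key
  rw [← hrr, mul_assoc, hz, mul_zero]

lemma myAnn_hereditary {S : Set A} {a b : A} (ha : 0 ≤ a) (hb : b ∈ myAnn S)
    (hab : a ≤ b) : a ∈ myAnn S := by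
  have hsa : IsSelfAdjoint a := IsSelfAdjoint.of_nonneg ha
  intro s hs
  obtain ⟨h1, h2, h3, h4⟩ := hb s hs
  -- conjugation by star s
  have c1 : s * a * star s = 0 := by
    have hle := star_left_conjugate_le_conjugate hab (star s)
    rw [star_star] at hle
    have : s * b * star s = 0 := by rw [mul_assoc, h3, mul_zero]
    have hge : 0 ≤ s * a * star s := by
      have := star_left_conjugate_nonneg ha (star s)
      rwa [star_star] at this
    exact le_antisymm (this ▸ hle) hge
  have e3 : a * star s = 0 := mul_star_eq_zero_of_conj ha c1
  have e2 : s * a = 0 := by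
    calc s * a = star (star a * star s) := by simp [star_mul]
      _ = star (a * star s) := by rw [hsa.star_eq]
      _ = 0 := by rw [e3, star_zero]
  -- conjugation by s
  have c2 : star s * a * s = 0 := by
    have hle := star_left_conjugate_le_conjugate hab s
    have : star s * b * s = 0 := by rw [h4, zero_mul]
    have hge : 0 ≤ star s * a * s := star_left_conjugate_nonneg ha s
    exact le_antisymm (this ▸ hle) hge
  have c2' : star s * a * star (star s) = 0 := by rwa [star_star]
  have e1 : a * s = 0 := by
    have := mul_star_eq_zero_of_conj ha c2'
    rwa [star_star] at this
  have e4 : star s * a = 0 := by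
    calc star s * a = star (star a * s) := by simp [star_mul]
      _ = star (a * s) := by rw [hsa.star_eq]
      _ = 0 := by rw [e1, star_zero]
  exact ⟨e1, e2, e3, e4⟩

end Ann

/-- Every C*-subalgebra (closed *-subalgebra) of a C*-algebra with the strong countable
chain condition has the strong countable chain condition. -/
theorem stmt_17 (A : Type*) [NonUnitalCStarAlgebra A] [PartialOrder A]
    [StarOrderedRing A] (h : StrongCCC A)
    (B : NonUnitalStarSubalgebra ℂ A) (hB : IsClosed (B : Set A)) :
    StrongCCC B := by
  intro 𝒮 hmem hortho
  set Φ : NonUnitalStarSubalgebra ℂ B → NonUnitalStarSubalgebra ℂ A :=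
    fun C => myAnn ((myAnn (Subtype.val '' (C : Set B)) : Set A)) with hΦ
  -- each C is contained (via coercion) in Φ C
  have hsubΦ : ∀ (C : NonUnitalStarSubalgebra ℂ B) (b : B), b ∈ C → (b : A) ∈ Φ C := by
    intro C b hb
    exact subset_myAnn_myAnn _ ⟨b, hb, rfl⟩
  -- orthogonality transfers to Φ
  have horthΦ : ∀ C₁ C₂ : NonUnitalStarSubalgebra ℂ B,
      (∀ b ∈ C₁, ∀ c ∈ C₂, (b : B) * c = 0) → (∀ b ∈ C₂, ∀ c ∈ C₁, (b : B) * c = 0) →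
      ∀ x ∈ Φ C₁, ∀ y ∈ Φ C₂, x * y = 0 := by
    intro C₁ C₂ h12 h21 x hx y hy
    have hsub : (Subtype.val '' (C₂ : Set B) : Set A) ⊆
        (myAnn (Subtype.val '' (C₁ : Set B)) : Set A) := by
      rintro _ ⟨c₂, hc₂, rfl⟩ _ ⟨c₁, hc₁, rfl⟩
      refine ⟨?_, ?_, ?_, ?_⟩
      · have := h21 c₂ hc₂ c₁ hc₁
        calc (c₂ : A) * c₁ = ((c₂ * c₁ : B) : A) := rfl
          _ = ((0 : B) : A) := by rw [this]
          _ = 0 := rfl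
      · have := h12 c₁ hc₁ c₂ hc₂
        calc (c₁ : A) * c₂ = ((c₁ * c₂ : B) : A) := rfl
          _ = ((0 : B) : A) := by rw [this]
          _ = 0 := rfl
      · have := h21 c₂ hc₂ (star c₁) (star_mem hc₁)
        calc (c₂ : A) * star (c₁ : A) = ((c₂ * star c₁ : B) : A) := rfl
          _ = ((0 : B) : A) := by rw [this]
          _ = 0 := rfl
      · have := h12 (star c₁) (star_mem hc₁) c₂ hc₂
        calc star (c₁ : A) * c₂ = ((star c₁ * c₂ : B) : A) := rfl
          _ = ((0 : B) : A) := by rw [this]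
          _ = 0 := rfl
    have hx' : x ∈ (myAnn (Subtype.val '' (C₂ : Set B)) : Set A) :=
      myAnn_antitone hsub hx
    exact (hy x hx').2.1
  -- injectivity of Φ on 𝒮
  have hinj : Set.InjOn Φ 𝒮 := by
    intro C₁ h₁ C₂ h₂ heq
    by_contra hne
    obtain ⟨b, hbC, hbne⟩ := (hmem C₁ h₁).2
    have horth12 := hortho h₁ h₂ hne
    have horth21 := hortho h₂ h₁ (Ne.symm hne)
    have hx : ((star b : B) : A) ∈ Φ C₁ := hsubΦ C₁ (star b) (star_mem hbC)
    have hy : ((b : B) : A) ∈ Φ C₂ := heq ▸ hsubΦ C₁ b hbC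
    have : ((star b : B) : A) * (b : A) = 0 := horthΦ C₁ C₂ horth12 horth21 _ hx _ hy
    have hb0 : star (b : A) * (b : A) = 0 := this
    have : (b : A) = 0 := (CStarRing.star_mul_self_eq_zero_iff _).mp hb0
    exact hbne (Subtype.coe_injective this)
  -- apply strong CCC in A to the image family
  have hcnt : (Φ '' 𝒮).Countable := by
    apply h
    · rintro _ ⟨C, hC, rfl⟩
      refine ⟨⟨myAnn_isClosed _, fun a b ha hb hbmem hab => myAnn_hereditary ha hbmem hab⟩, ?_⟩
      obtain ⟨b, hbC, hbne⟩ := (hmem C hC).2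
      exact ⟨(b : A), hsubΦ C b hbC, fun h0 => hbne (Subtype.coe_injective h0)⟩
    · rintro _ ⟨C₁, h₁, rfl⟩ _ ⟨C₂, h₂, rfl⟩ hne
      have hne' : C₁ ≠ C₂ := fun e => hne (by rw [e])
      exact fun x hx y hy => horthΦ C₁ C₂ (hortho h₁ h₂ hne') (hortho h₂ h₁ (Ne.symm hne'))
        x hx y hy
  exact Set.countable_of_injective_of_countable_image hinj hcnt
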